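/- Let Ψ:[t₀,∞)→(0,∞) be non-decreasing and let f be a dimension function. If the double series ∑_{q=1}^∞ ∑_{1≤p≤q} f(1/(p·q·Ψ(q))) converges, then the f-dimensional Hausdorff measure of G(Ψ) is zero. -/

import Mathlib

open Filter MeasureTheory Set

/-- The Gauss map `T(x) = 1/x mod 1`, with `T(0) = 0`. -/
noncomputable def gaussMap (x : ℝ) : ℝ := if x = 0 then 0 else Int.fract (1 / x)

/-- `cfA x n` is the `n`-th partial quotient `a_n(x)` of the continued fraction
expansion of `x ∈ [0,1)`, for `n ≥ 1`: `a_n(x) = ⌊1 / T^{n-1}(x)⌋`. -/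
noncomputable def cfA (x : ℝ) (n : ℕ) : ℕ := ⌊1 / (gaussMap^[n - 1] x)⌋₊

/-- `cfQ x n` is the denominator `q_n(x)` of the `n`-th convergent of `x`:
`q₀ = 1`, `q₁ = a₁`, `q_{n+2} = a_{n+2} q_{n+1} + q_n`. -/
noncomputable def cfQ (x : ℝ) : ℕ → ℕ
  | 0 => 1
  | 1 => cfA x 1
  | (n + 2) => cfA x (n + 2) * cfQ x (n + 1) + cfQ x n

/-- `G(Ψ)`: the set of irrational `x ∈ [0,1)` with `a_n(x) a_{n+1}(x) > Ψ(q_n(x))` for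
infinitely many `n`. -/
def GSet (Ψ : ℝ → ℝ) : Set ℝ :=
  {x | x ∈ Ico (0 : ℝ) 1 ∧ Irrational x ∧
    {n : ℕ | 0 < n ∧ Ψ (cfQ x n) < (cfA x n : ℝ) * cfA x (n + 1)}.Infinite}

/-- A dimension function: an increasing continuous function `f : (0,∞) → (0,∞)` with
`f(r) → 0` as `r → 0`. -/
def IsDimensionFunction (f : ℝ → ℝ) : Prop :=
  (∀ x, 0 < x → 0 < f x) ∧ StrictMonoOn f (Ioi 0) ∧ ContinuousOn f (Ioi 0) ∧
    Tendsto f (nhdsWithin 0 (Ioi 0)) (nhds 0)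

/-- The `f`-dimensional Hausdorff measure on `ℝ`, for a dimension function `f`. -/
noncomputable def hausdorffWith (f : ℝ → ℝ) : Measure ℝ :=
  Measure.mkMetric fun r => ENNReal.ofReal (f r.toReal)

open scoped ENNReal Topology NNReal

/-- `cfP x n` is the numerator `p_n(x)` of the `n`-th convergent of `x`. -/
noncomputable def cfP (x : ℝ) : ℕ → ℕ
  | 0 => 0
  | 1 => 1
  | (n + 2) => cfA x (n + 2) * cfP x (n + 1) + cfP x n

lemma irrational_mem_Ioo {x : ℝ} (hx : Irrational x) (h0 : x ∈ Ico (0:ℝ) 1) :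
    x ∈ Ioo (0:ℝ) 1 :=
  ⟨lt_of_le_of_ne h0.1 (by exact fun h => hx ⟨0, by push_cast; exact h⟩), h0.2⟩

lemma gaussMap_good {x : ℝ} (hx : Irrational x) (h0 : x ∈ Ioo (0:ℝ) 1) :
    Irrational (gaussMap x) ∧ gaussMap x ∈ Ioo (0:ℝ) 1 := by
  have hne : x ≠ 0 := ne_of_gt h0.1
  have hinv : Irrational (1 / x) := by
    rw [one_div]
    intro ⟨q, hq⟩
    exact hx ⟨q⁻¹, by rw [Rat.cast_inv, hq, inv_inv]⟩
  have hfr : Irrational (Int.fract (1 / x)) := by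
    rw [Int.fract]
    exact Irrational.sub_intCast hinv _
  have h1 : gaussMap x = Int.fract (1 / x) := by rw [gaussMap, if_neg hne]
  rw [h1]
  refine ⟨hfr, lt_of_le_of_ne (Int.fract_nonneg _) ?_, Int.fract_lt_one _⟩
  intro h
  exact hfr ⟨0, by push_cast; exact h⟩

lemma iter_good {x : ℝ} (hx : Irrational x) (h0 : x ∈ Ioo (0:ℝ) 1) (n : ℕ) :
    Irrational (gaussMap^[n] x) ∧ gaussMap^[n] x ∈ Ioo (0:ℝ) 1 := by
  induction n with
  | zero => exact ⟨hx, h0⟩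
  | succ n ih =>
    rw [Function.iterate_succ_apply']
    exact gaussMap_good ih.1 ih.2

/-- `1 / t_n = a_{n+1} + t_{n+1}` and `a_{n+1} ≥ 1`. -/
lemma cfA_key {x : ℝ} (hx : Irrational x) (h0 : x ∈ Ioo (0:ℝ) 1) (n : ℕ) :
    1 / (gaussMap^[n] x) = (cfA x (n+1) : ℝ) + gaussMap^[n+1] x ∧ 1 ≤ cfA x (n+1) := by
  obtain ⟨hirr, ht⟩ := iter_good hx h0 n
  set t := gaussMap^[n] x with htdef
  have htne : t ≠ 0 := ne_of_gt ht.1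
  have h1t : 1 < 1 / t := by
    rw [lt_div_iff₀ ht.1]; linarith [ht.2]
  have hA : cfA x (n+1) = ⌊1 / t⌋₊ := by rw [cfA]; norm_num; rfl
  have hnn : (0:ℤ) ≤ ⌊1 / t⌋ := Int.floor_nonneg.mpr (by linarith)
  have hcast : (cfA x (n+1) : ℝ) = (⌊1 / t⌋ : ℝ) := by
    rw [hA, ← Int.floor_toNat]
    exact_mod_cast Int.toNat_of_nonneg hnn
  constructor
  · rw [Function.iterate_succ_apply', gaussMap, if_neg htne, Int.fract, hcast]
    ring
  · rw [hA]
    exact (Nat.one_le_floor_iff _).mpr (le_of_lt h1t)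

section CF
variable {x : ℝ} (hx : Irrational x) (h0 : x ∈ Ioo (0:ℝ) 1)
include hx h0

lemma cfA_pos (n : ℕ) : 1 ≤ cfA x (n+1) := (cfA_key hx h0 n).2

lemma cfQ_pos (n : ℕ) : 1 ≤ cfQ x n := by
  induction n using Nat.twoStepInduction with
  | zero => simp [cfQ]
  | one => simpa [cfQ] using cfA_pos hx h0 0
  | more n ih1 ih2 =>
    have := cfA_pos hx h0 (n+1)
    rw [cfQ]
    nlinarith

lemma cfP_le_cfQ (n : ℕ) : cfP x n ≤ cfQ x n := by
  induction n using Nat.twoStepInduction with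
  | zero => simp [cfP, cfQ]
  | one => simpa [cfP, cfQ] using cfA_pos hx h0 0
  | more n ih1 ih2 =>
    rw [cfP, cfQ]
    have := cfA_pos hx h0 (n+1)
    nlinarith

lemma cfP_lt_cfQ (n : ℕ) : cfP x (n+2) < cfQ x (n+2) := by
  induction n with
  | zero =>
    have h1 := cfA_pos hx h0 0
    have h2 := cfA_pos hx h0 1
    simp only [cfP, cfQ]
    nlinarith
  | succ n ih =>
    have h1 := cfA_pos hx h0 (n+2)
    have h2 := cfP_le_cfQ hx h0 (n+1)
    rw [show n+1+2 = n+3 from rfl] at *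
    rw [cfP, cfQ]
    nlinarith

lemma cfP_pos (n : ℕ) : 1 ≤ cfP x (n+1) := by
  induction n using Nat.twoStepInduction with
  | zero => simp [cfP]
  | one =>
    have := cfA_pos hx h0 1
    simp only [cfP]
    nlinarith
  | more n ih1 ih2 =>
    have := cfA_pos hx h0 (n+2)
    rw [show n+2+1 = n+3 from rfl, cfP]
    nlinarith

lemma cfQ_lt_succ (n : ℕ) : cfQ x (n+1) < cfQ x (n+2) := by
  have h1 := cfA_pos hx h0 (n+1)
  have h2 := cfQ_pos hx h0 n
  have h3 := cfQ_pos hx h0 (n+1)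
  rw [cfQ]
  nlinarith

lemma le_cfQ (n : ℕ) : n ≤ cfQ x n := by
  induction n using Nat.twoStepInduction with
  | zero => simp [cfQ]
  | one => simpa [cfQ] using cfA_pos hx h0 0
  | more n ih1 ih2 =>
    have h1 := cfA_pos hx h0 (n+1)
    have h2 := cfQ_pos hx h0 n
    rw [cfQ]
    nlinarith

lemma cfA_mul_cfQ_le (n : ℕ) : cfA x (n+1) * cfQ x n ≤ cfQ x (n+1) := by
  cases n with
  | zero => simp [cfQ]
  | succ n =>
    show cfA x (n+2) * cfQ x (n+1) ≤ cfQ x (n+2)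
    rw [cfQ]
    omega

lemma cf_conv (n : ℕ) :
    x * ((cfQ x (n+1) : ℝ) + (cfQ x n : ℝ) * gaussMap^[n+1] x)
      = (cfP x (n+1) : ℝ) + (cfP x n : ℝ) * gaussMap^[n+1] x := by
  induction n with
  | zero =>
    have hk := (cfA_key hx h0 0).1
    simp only [Function.iterate_zero_apply] at hk
    have hxne : x ≠ 0 := ne_of_gt h0.1
    simp only [cfQ, cfP, Nat.cast_one, Nat.cast_zero]
    have : x * (1 / x) = 1 := mul_one_div_cancel hxne
    rw [hk] at this
    push_cast
    linarith [this]
  | succ n ih =>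
    have hk := (cfA_key hx h0 (n+1)).1
    have htpos := (iter_good hx h0 (n+1)).2.1
    have htne : gaussMap^[n+1] x ≠ 0 := ne_of_gt htpos
    set t := gaussMap^[n+1] x
    set t' := gaussMap^[n+1+1] x
    have hinv : t * ((cfA x (n+2) : ℝ) + t') = 1 := by
      have e2 : cfA x (n+1+1) = cfA x (n+2) := rfl
      rw [← e2, ← hk]
      field_simp
    have hQ : (cfQ x (n+2) : ℝ) = (cfA x (n+2) : ℝ) * cfQ x (n+1) + cfQ x n := by
      rw [cfQ]; push_cast; ring
    have hP : (cfP x (n+2) : ℝ) = (cfA x (n+2) : ℝ) * cfP x (n+1) + cfP x n := by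
      rw [cfP]; push_cast; ring
    show x * ((cfQ x (n+2) : ℝ) + (cfQ x (n+1) : ℝ) * t') = (cfP x (n+2) : ℝ) + (cfP x (n+1) : ℝ) * t'
    rw [hQ, hP]
    linear_combination ((cfA x (n+2) : ℝ) + t') * ih + ((cfP x n : ℝ) - x * (cfQ x n : ℝ)) * hinv

omit hx h0 in
lemma cf_det (n : ℕ) :
    (cfP x (n+1) : ℤ) * cfQ x n - (cfP x n : ℤ) * cfQ x (n+1) = (-1)^n := by
  induction n with
  | zero => simp [cfP, cfQ]
  | succ n ih =>
    have hQ : (cfQ x (n+2) : ℤ) = (cfA x (n+2) : ℤ) * cfQ x (n+1) + cfQ x n := by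
      rw [cfQ]; push_cast; ring
    have hP : (cfP x (n+2) : ℤ) = (cfA x (n+2) : ℤ) * cfP x (n+1) + cfP x n := by
      rw [cfP]; push_cast; ring
    rw [show n+1+1 = n+2 from rfl, hQ, hP, pow_succ]
    linear_combination (-1 : ℤ) * ih

lemma cf_approx (n : ℕ) :
    |x - (cfP x (n+1) : ℝ) / (cfQ x (n+1) : ℝ)|
      ≤ 1 / ((cfA x (n+2) : ℝ) * ((cfQ x (n+1) : ℝ))^2) := by
  have hconv := cf_conv hx h0 n
  have hdet : ((cfP x (n+1) : ℝ) * cfQ x n - (cfP x n : ℝ) * cfQ x (n+1)) = (-1:ℝ)^n := by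
    exact_mod_cast congrArg (fun z : ℤ => (z : ℝ)) (cf_det (x := x) n)
  have htmem := (iter_good hx h0 (n+1)).2
  set t := gaussMap^[n+1] x with htdef
  set P1 := (cfP x (n+1) : ℝ)
  set P0 := (cfP x n : ℝ)
  set Q1 := (cfQ x (n+1) : ℝ)
  set Q0 := (cfQ x n : ℝ)
  have hQ1pos : (0:ℝ) < Q1 := by
    have := cfQ_pos hx h0 (n+1); positivity
  have hQ0pos : (0:ℝ) < Q0 := by
    have := cfQ_pos hx h0 n; positivity
  have hApos : (1:ℝ) ≤ (cfA x (n+2) : ℝ) := by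
    exact_mod_cast cfA_pos hx h0 (n+1)
  have key : (x * Q1 - P1) * (Q1 + Q0 * t) = (P0 * Q1 - P1 * Q0) * t := by
    linear_combination Q1 * hconv
  have habs1 : |P0 * Q1 - P1 * Q0| = 1 := by
    have : P0 * Q1 - P1 * Q0 = -(-1:ℝ)^n := by linarith [hdet]
    rw [this, abs_neg]
    rcases Nat.even_or_odd n with h | h
    · rw [h.neg_one_pow]; norm_num
    · rw [h.neg_one_pow]; norm_num
  have hden : (0:ℝ) < Q1 + Q0 * t := by nlinarith [htmem.1]
  have habs : |x * Q1 - P1| * (Q1 + Q0 * t) = t := by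
    have := congrArg abs key
    rw [abs_mul, abs_mul, habs1, one_mul, abs_of_pos hden, abs_of_pos htmem.1] at this
    exact this
  -- t ≤ 1 / A
  have hkey2 := (cfA_key hx h0 (n+1)).1
  have htA : t * (cfA x (n+2) : ℝ) ≤ 1 := by
    have e2 : cfA x (n+1+1) = cfA x (n+2) := rfl
    rw [e2] at hkey2
    have ht2 := (iter_good hx h0 (n+2)).2.1
    have e3 : gaussMap^[n+1+1] x = gaussMap^[n+2] x := rfl
    rw [e3] at hkey2
    have : t * (1 / t) = 1 := mul_one_div_cancel (ne_of_gt htmem.1)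
    nlinarith [htmem.1]
  -- conclude
  have h1 : |x * Q1 - P1| = t / (Q1 + Q0 * t) := by
    field_simp at habs ⊢
    linarith [habs]
  have h2 : |x - P1 / Q1| = t / (Q1 * (Q1 + Q0 * t)) := by
    have : x - P1 / Q1 = (x * Q1 - P1) / Q1 := by field_simp
    rw [this, abs_div, abs_of_pos hQ1pos, h1, div_div, mul_comm]
  rw [h2]
  rw [div_le_div_iff₀ (by positivity) (by positivity)]
  have ht1 : t ≤ 1 := le_of_lt htmem.2
  nlinarith [mul_le_mul_of_nonneg_right htA (sq_nonneg Q1),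
    mul_pos (mul_pos hQ1pos hQ0pos) htmem.1]

end CF

/-- Index function recovering `q_{n-1}` from `p_n` modulo `q_n`. -/
noncomputable def cfRfun (q p : ℕ) (s : Bool) : ℕ :=
  if Nat.Coprime p q ∧ 0 < p ∧ p < q then
    (if s then ((p : ZMod q)⁻¹).val else q - ((p : ZMod q)⁻¹).val)
  else q

lemma inv_val_mem {q p : ℕ} (hq : 2 ≤ q) (hcop : Nat.Coprime p q) :
    1 ≤ ((p : ZMod q)⁻¹).val ∧ ((p : ZMod q)⁻¹).val ≤ q - 1 := by
  haveI : NeZero q := ⟨by omega⟩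
  haveI : Fact (1 < q) := ⟨by omega⟩
  have hlt : ((p : ZMod q)⁻¹).val < q := ZMod.val_lt _
  have hne : ((p : ZMod q)⁻¹).val ≠ 0 := by
    intro h
    have h0 : (p : ZMod q)⁻¹ = 0 := by
      rwa [ZMod.val_eq_zero] at h
    have h1 : (p : ZMod q) * (p : ZMod q)⁻¹ = 1 := ZMod.coe_mul_inv_eq_one p hcop
    rw [h0, mul_zero] at h1
    exact zero_ne_one h1
  omega

lemma cfRfun_mem {q : ℕ} (hq : 2 ≤ q) (p : ℕ) (s : Bool) :
    cfRfun q p s ∈ Finset.Icc 1 q := by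
  rw [cfRfun]
  split
  · next h =>
    have := inv_val_mem hq h.1
    cases s <;> simp only [if_true, if_false, Bool.false_eq_true, ite_true, ite_false] <;>
      simp [Finset.mem_Icc] <;> omega
  · simp [Finset.mem_Icc]; omega

section CF2
variable {x : ℝ} (hx : Irrational x) (h0 : x ∈ Ioo (0:ℝ) 1)
include hx h0

lemma cf_coprime (m : ℕ) : Nat.Coprime (cfP x (m+2)) (cfQ x (m+2)) := by
  have hdet := cf_det (x := x) (m+1)
  rw [← Nat.isCoprime_iff_coprime]
  rcases Nat.even_or_odd (m+1) with h | h
  · rw [h.neg_one_pow] at hdet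
    exact ⟨(cfQ x (m+1) : ℤ), -(cfP x (m+1) : ℤ), by push_cast at hdet ⊢; linarith⟩
  · rw [h.neg_one_pow] at hdet
    exact ⟨-(cfQ x (m+1) : ℤ), (cfP x (m+1) : ℤ), by push_cast at hdet ⊢; linarith⟩

lemma cf_rfun_eq (m : ℕ) :
    ∃ s : Bool, cfRfun (cfQ x (m+2)) (cfP x (m+2)) s = cfQ x (m+1) := by
  set q := cfQ x (m+2) with hqdef
  set p := cfP x (m+2) with hpdef
  set r := cfQ x (m+1) with hrdef
  have hq2 : 2 ≤ q := by
    have h1 := cfQ_pos hx h0 m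
    have h2 := cfQ_lt_succ hx h0 m
    have h3 : cfQ x m < cfQ x (m+1) ∨ m = 0 := by
      cases m with
      | zero => right; rfl
      | succ k => left; exact cfQ_lt_succ hx h0 k
    have h4 := cfQ_pos hx h0 (m+1)
    omega
  haveI : NeZero q := ⟨by omega⟩
  haveI : Fact (1 < q) := ⟨by omega⟩
  have hrlt : r < q := cfQ_lt_succ hx h0 m
  have hrpos : 1 ≤ r := cfQ_pos hx h0 (m+1)
  have hppos : 0 < p := cfP_pos hx h0 (m+1)
  have hplt : p < q := cfP_lt_cfQ hx h0 m
  have hcop : Nat.Coprime p q := cf_coprime hx h0 m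
  have hdet := cf_det (x := x) (m+1)
  -- cast to ZMod q
  have hz : (p : ZMod q) * (r : ZMod q) = ((-1 : ℤ)^(m+1) : ZMod q) := by
    have := congrArg (fun z : ℤ => (z : ZMod q)) hdet
    push_cast at this
    rw [ZMod.natCast_self] at this
    push_cast
    linear_combination this + ((cfP x (m+1) : ZMod q)) * (0 : ZMod q)
  push_cast at hz
  rcases Nat.even_or_odd (m+1) with h | h
  · refine ⟨true, ?_⟩
    rw [h.neg_one_pow] at hz
    have hinv : (p : ZMod q)⁻¹ = (r : ZMod q) := ZMod.inv_eq_of_mul_eq_one q _ _ hz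
    rw [cfRfun, if_pos ⟨hcop, hppos, hplt⟩, if_pos rfl, hinv, ZMod.val_natCast,
      Nat.mod_eq_of_lt hrlt]
  · refine ⟨false, ?_⟩
    rw [h.neg_one_pow] at hz
    have hz2 : (p : ZMod q) * ((q - r : ℕ) : ZMod q) = 1 := by
      have : ((q - r : ℕ) : ZMod q) = -(r : ZMod q) := by
        have hcast : ((q - r : ℕ) : ZMod q) + (r : ZMod q) = (q : ZMod q) := by
          rw [← Nat.cast_add, Nat.sub_add_cancel (le_of_lt hrlt)]
        rw [ZMod.natCast_self] at hcast
        linear_combination hcast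
      rw [this]
      linear_combination -hz
    have hinv : (p : ZMod q)⁻¹ = ((q - r : ℕ) : ZMod q) := ZMod.inv_eq_of_mul_eq_one q _ _ hz2
    rw [cfRfun, if_pos ⟨hcop, hppos, hplt⟩]
    simp only [Bool.false_eq_true, if_false]
    rw [hinv, ZMod.val_natCast, Nat.mod_eq_of_lt (by omega)]
    omega

end CF2

lemma cfRfun_injOn {q : ℕ} (hq : 2 ≤ q) (s : Bool) :
    Set.InjOn (fun p => cfRfun q p s)
      ((Finset.range (q+1)).filter
        (fun p => Nat.Coprime p q ∧ 0 < p ∧ p < q) : Finset ℕ) := by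
  haveI : NeZero q := ⟨by omega⟩
  intro p1 hp1 p2 hp2 heq
  simp only [Finset.coe_filter, Set.mem_setOf_eq, Finset.mem_range] at hp1 hp2
  obtain ⟨-, hc1, h01, hl1⟩ := hp1
  obtain ⟨-, hc2, h02, hl2⟩ := hp2
  simp only [cfRfun, if_pos (⟨hc1, h01, hl1⟩ : _ ∧ _ ∧ _),
    if_pos (⟨hc2, h02, hl2⟩ : _ ∧ _ ∧ _)] at heq
  have hiv : ((p1 : ZMod q)⁻¹).val = ((p2 : ZMod q)⁻¹).val := by
    have m1 := inv_val_mem hq hc1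
    have m2 := inv_val_mem hq hc2
    cases s <;> simp only [if_true, Bool.false_eq_true, if_false] at heq <;> omega
  have hinv : (p1 : ZMod q)⁻¹ = (p2 : ZMod q)⁻¹ := by
    have e1 : ((((p1 : ZMod q)⁻¹).val : ℕ) : ZMod q) = (p1 : ZMod q)⁻¹ := ZMod.natCast_zmod_val _
    have e2 : ((((p2 : ZMod q)⁻¹).val : ℕ) : ZMod q) = (p2 : ZMod q)⁻¹ := ZMod.natCast_zmod_val _
    rw [← e1, ← e2, hiv]
  have h1 : (p1 : ZMod q) * (p1 : ZMod q)⁻¹ = 1 := ZMod.coe_mul_inv_eq_one p1 hc1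
  have h2 : (p2 : ZMod q) * (p2 : ZMod q)⁻¹ = 1 := ZMod.coe_mul_inv_eq_one p2 hc2
  have hcast : (p1 : ZMod q) = (p2 : ZMod q) := by
    calc (p1 : ZMod q) = (p1 : ZMod q) * ((p2 : ZMod q) * (p2 : ZMod q)⁻¹) := by rw [h2, mul_one]
    _ = (p2 : ZMod q) * ((p1 : ZMod q) * (p1 : ZMod q)⁻¹) := by rw [← hinv]; ring
    _ = (p2 : ZMod q) := by rw [h1, mul_one]
  have v1 : ((p1 : ZMod q)).val = p1 := ZMod.val_cast_of_lt (by omega)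
  have v2 : ((p2 : ZMod q)).val = p2 := ZMod.val_cast_of_lt (by omega)
  rw [← v1, ← v2, hcast]

lemma count_bound (f : ℝ → ℝ) (hfm : MonotoneOn f (Ioi (0:ℝ)))
    (hfp : ∀ y : ℝ, 0 < y → 0 < f y) (q : ℕ) (hq : 2 ≤ q) (c : ℝ) (hc : 0 < c) (s : Bool) :
    ∑ p ∈ Finset.range (q+1), f (1 / ((cfRfun q p s : ℝ) * q * c))
      ≤ 3 * ∑ r ∈ Finset.Icc 1 q, f (1 / ((r : ℝ) * q * c)) := by
  have hqR : (0:ℝ) < q := by positivity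
  set F : ℕ → ℝ := fun r => f (1 / ((r : ℝ) * q * c)) with hF
  have hFpos : ∀ r : ℕ, 1 ≤ r → 0 < F r := fun r hr => hfp _ (by
    have : (1:ℝ) ≤ (r:ℝ) := by exact_mod_cast hr
    positivity)
  have hFq : ∀ r : ℕ, 1 ≤ r → r ≤ q → F q ≤ F r := by
    intro r h1 h2
    apply hfm (by
      have : (1:ℝ) ≤ (q:ℝ) := by exact_mod_cast (by omega : 1 ≤ q)
      exact mem_Ioi.mpr (by positivity)) (by
      have : (1:ℝ) ≤ (r:ℝ) := by exact_mod_cast h1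
      exact mem_Ioi.mpr (by positivity))
    apply one_div_le_one_div_of_le
    · have : (1:ℝ) ≤ (r:ℝ) := by exact_mod_cast h1
      positivity
    · have hrq : (r:ℝ) ≤ (q:ℝ) := by exact_mod_cast h2
      nlinarith [mul_le_mul_of_nonneg_right (mul_le_mul_of_nonneg_right hrq hqR.le) hc.le]
  have hsplit := Finset.sum_filter_add_sum_filter_not (Finset.range (q+1))
    (fun p => Nat.Coprime p q ∧ 0 < p ∧ p < q) (fun p => F (cfRfun q p s))
  set A := (Finset.range (q+1)).filter (fun p => Nat.Coprime p q ∧ 0 < p ∧ p < q) with hA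
  set B := (Finset.range (q+1)).filter (fun p => ¬(Nat.Coprime p q ∧ 0 < p ∧ p < q)) with hB
  have hsumIcc_pos : ∀ r ∈ Finset.Icc 1 q, 0 ≤ F r := by
    intro r hr
    rw [Finset.mem_Icc] at hr
    exact le_of_lt (hFpos r hr.1)
  -- A part
  have hApart : ∑ p ∈ A, F (cfRfun q p s) ≤ ∑ r ∈ Finset.Icc 1 q, F r := by
    have hinj : ∀ p1 ∈ A, ∀ p2 ∈ A, cfRfun q p1 s = cfRfun q p2 s → p1 = p2 := by
      intro p1 h1 p2 h2 h
      exact cfRfun_injOn hq s (Finset.mem_coe.mpr h1) (Finset.mem_coe.mpr h2) h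
    calc ∑ p ∈ A, F (cfRfun q p s)
        = ∑ r ∈ A.image (fun p => cfRfun q p s), F r := (Finset.sum_image hinj).symm
      _ ≤ ∑ r ∈ Finset.Icc 1 q, F r := by
          apply Finset.sum_le_sum_of_subset_of_nonneg
          · intro r hr
            obtain ⟨p, -, rfl⟩ := Finset.mem_image.mp hr
            exact cfRfun_mem hq p s
          · intro r hr _
            exact le_of_lt (hFpos r (Finset.mem_Icc.mp hr).1)
  -- B part
  have hBpart : ∑ p ∈ B, F (cfRfun q p s) ≤ 2 * ∑ r ∈ Finset.Icc 1 q, F r := by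
    have hBval : ∀ p ∈ B, F (cfRfun q p s) = F q := by
      intro p hp
      rw [hB, Finset.mem_filter] at hp
      rw [cfRfun, if_neg hp.2]
    rw [Finset.sum_congr rfl hBval, Finset.sum_const, nsmul_eq_mul]
    have hcard : (B.card : ℝ) ≤ (q:ℝ) + 1 := by
      have : B.card ≤ q + 1 := le_trans (Finset.card_filter_le _ _) (by simp)
      exact_mod_cast this
    have hlow : (q:ℝ) * F q ≤ ∑ r ∈ Finset.Icc 1 q, F r := by
      have := Finset.sum_le_sum (f := fun _ : ℕ => F q) (g := F) (s := Finset.Icc 1 q)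
        (fun r hr => hFq r (Finset.mem_Icc.mp hr).1 (Finset.mem_Icc.mp hr).2)
      simpa [Nat.card_Icc, mul_comm] using this
    have hFqpos : 0 < F q := hFpos q (by omega)
    have hq1 : ((q:ℝ)+1) ≤ 2*(q:ℝ) := by
      have : (2:ℝ) ≤ (q:ℝ) := by exact_mod_cast hq
      linarith
    nlinarith [mul_le_mul_of_nonneg_right hcard hFqpos.le,
      mul_le_mul_of_nonneg_right hq1 hFqpos.le, hlow]
  linarith [hsplit, hApart, hBpart]

/-- The index type of the `N`-th cover. -/
abbrev covIdx (Q₀ N : ℕ) : Type := Σ k : ℕ, Fin (k + (N + Q₀) + 1) × Bool × Bool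

instance (Q₀ N : ℕ) : Countable (covIdx Q₀ N) := by
  unfold covIdx; infer_instance

/-- The covering intervals. -/
noncomputable def covSet (Ψ : ℝ → ℝ) (Q₀ N : ℕ) (i : covIdx Q₀ N) : Set ℝ :=
  Icc ((i.2.1 : ℝ)/(i.1 + (N + Q₀) : ℕ)
        - (if i.2.2.2 then 1 else 0) * (1/((cfRfun (i.1 + (N + Q₀)) i.2.1 i.2.2.1 : ℝ)
            * ((i.1 + (N + Q₀) : ℕ) : ℝ) * Ψ ((i.1 + (N + Q₀) : ℕ) : ℝ))))
      ((i.2.1 : ℝ)/(i.1 + (N + Q₀) : ℕ)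
        + (if i.2.2.2 then 0 else 1) * (1/((cfRfun (i.1 + (N + Q₀)) i.2.1 i.2.2.1 : ℝ)
            * ((i.1 + (N + Q₀) : ℕ) : ℝ) * Ψ ((i.1 + (N + Q₀) : ℕ) : ℝ))))

lemma covSet_ediam (Ψ : ℝ → ℝ) (Q₀ N : ℕ) (i : covIdx Q₀ N) :
    EMetric.diam (covSet Ψ Q₀ N i)
      = ENNReal.ofReal (1/((cfRfun (i.1 + (N + Q₀)) i.2.1 i.2.2.1 : ℝ)
          * ((i.1 + (N + Q₀) : ℕ) : ℝ) * Ψ ((i.1 + (N + Q₀) : ℕ) : ℝ))) := by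
  rw [covSet, EMetric.diam, Real.ediam_Icc]
  congr 1
  cases h : i.2.2.2 <;> simp <;> ring


/-- **Convergence part of the zero-infinity law for `G(Ψ)` via the double series.**
If `Ψ : [t₀,∞) → (0,∞)` is non-decreasing, `f` is a dimension function, and
`∑_q ∑_{1 ≤ p ≤ q} f(1/(p q Ψ(q)))` converges, then `H^f(G(Ψ)) = 0`. -/
theorem hausdorffWith_GSet_eq_zero_of_summable_double
    (t₀ : ℝ) (Ψ : ℝ → ℝ)
    (hΨpos : ∀ t ∈ Ici t₀, 0 < Ψ t) (hΨmono : MonotoneOn Ψ (Ici t₀))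
    (f : ℝ → ℝ) (hf : IsDimensionFunction f)
    (hsum : Summable fun q : ℕ => ∑ p ∈ Finset.Icc 1 q, f (1 / ((p : ℝ) * q * Ψ q))) :
    hausdorffWith f (GSet Ψ) = 0 := by
  classical
  obtain ⟨hfpos, hfmono', hfcont, hflim⟩ := hf
  have hfmono : MonotoneOn f (Ioi (0:ℝ)) := hfmono'.monotoneOn
  set Q₀ : ℕ := ⌈t₀⌉₊ + 2 with hQ₀def
  have hQ₀2 : 2 ≤ Q₀ := by omega
  have ht₀le : ∀ q : ℕ, Q₀ ≤ q → t₀ ≤ (q:ℝ) := by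
    intro q hq
    calc t₀ ≤ (⌈t₀⌉₊ : ℝ) := Nat.le_ceil t₀
    _ ≤ (q:ℝ) := by exact_mod_cast (by omega : ⌈t₀⌉₊ ≤ q)
  have hΨposN : ∀ q : ℕ, Q₀ ≤ q → 0 < Ψ q := fun q hq => hΨpos _ (ht₀le q hq)
  have hΨmonoN : ∀ q : ℕ, Q₀ ≤ q → Ψ Q₀ ≤ Ψ q := fun q hq =>
    hΨmono (ht₀le Q₀ le_rfl) (ht₀le q hq) (by exact_mod_cast hq)
  set g : ℕ → ℝ := fun q => ∑ p ∈ Finset.Icc 1 q, f (1 / ((p : ℝ) * q * Ψ q)) with hgdef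
  set m : ℝ≥0∞ → ℝ≥0∞ := fun r => ENNReal.ofReal (f r.toReal) with hmdef
  -- generic facts about each covering interval
  have hqbound : ∀ N : ℕ, ∀ i : covIdx Q₀ N,
      0 < 1/((cfRfun (i.1 + (N + Q₀)) i.2.1 i.2.2.1 : ℝ)
          * ((i.1 + (N + Q₀) : ℕ) : ℝ) * Ψ ((i.1 + (N + Q₀) : ℕ) : ℝ)) ∧
      1/((cfRfun (i.1 + (N + Q₀)) i.2.1 i.2.2.1 : ℝ)
          * ((i.1 + (N + Q₀) : ℕ) : ℝ) * Ψ ((i.1 + (N + Q₀) : ℕ) : ℝ))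
        ≤ 1/(((N:ℝ) + Q₀) * Ψ (Q₀ : ℝ)) := by
    intro N i
    set q : ℕ := i.1 + (N + Q₀) with hq
    have hqge : Q₀ ≤ q := by omega
    have hq2 : 2 ≤ q := by omega
    have hr := Finset.mem_Icc.mp (cfRfun_mem hq2 (i.2.1 : ℕ) i.2.2.1)
    set r : ℕ := cfRfun q (i.2.1 : ℕ) i.2.2.1 with hrdef
    have hΨq : 0 < Ψ q := hΨposN q hqge
    have hΨQ₀ : 0 < Ψ (Q₀:ℝ) := hΨposN Q₀ le_rfl
    have hr1 : (1:ℝ) ≤ (r:ℝ) := by exact_mod_cast hr.1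
    have hqR : (0:ℝ) < (q:ℝ) := by positivity
    constructor
    · positivity
    · apply one_div_le_one_div_of_le
      · positivity
      · have h1 : ((N:ℝ) + Q₀) ≤ (q:ℝ) := by
          have : N + Q₀ ≤ q := by omega
          exact_mod_cast this
        have h2 : Ψ (Q₀:ℝ) ≤ Ψ (q:ℝ) := hΨmonoN q hqge
        nlinarith [mul_le_mul_of_nonneg_right h1 hΨQ₀.le,
          mul_le_mul_of_nonneg_left h2 hqR.le,
          mul_le_mul_of_nonneg_right hr1 (mul_pos hqR hΨq).le]
  -- apply the covering lemma
  have hrtend : Tendsto (fun N : ℕ => ENNReal.ofReal (1/(((N:ℝ) + Q₀) * Ψ (Q₀:ℝ))))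
      atTop (𝓝 0) := by
    rw [show (0:ℝ≥0∞) = ENNReal.ofReal 0 by simp]
    apply ENNReal.tendsto_ofReal
    have hΨQ₀ : 0 < Ψ (Q₀:ℝ) := hΨposN Q₀ le_rfl
    have heq : ∀ N : ℕ, 1/(((N:ℝ) + Q₀) * Ψ (Q₀:ℝ)) = (1 / Ψ (Q₀:ℝ)) / ((N:ℝ) + Q₀) := by
      intro N
      have : ((N:ℝ) + Q₀) > 0 := by positivity
      field_simp
    simp only [heq]
    apply Tendsto.div_atTop tendsto_const_nhds
    exact tendsto_atTop_add_const_right atTop _ tendsto_natCast_atTop_atTop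
  have hcov : ∀ N : ℕ, GSet Ψ ⊆ ⋃ i : covIdx Q₀ N, covSet Ψ Q₀ N i := by
    intro N x hxG
    obtain ⟨hIco, hirr, hinf⟩ := hxG
    have h0 : x ∈ Ioo (0:ℝ) 1 := irrational_mem_Ioo hirr hIco
    obtain ⟨n, hnS, hngt⟩ := hinf.exists_gt (N + Q₀ + 1)
    obtain ⟨m', rfl⟩ : ∃ m', n = m' + 2 := ⟨n - 2, by omega⟩
    obtain ⟨-, hcond⟩ := hnS
    set q : ℕ := cfQ x (m' + 2) with hq
    have hqge : N + Q₀ + 2 ≤ q := le_trans (by omega) (le_cfQ hirr h0 (m' + 2))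
    set p : ℕ := cfP x (m' + 2) with hp
    have hplt : p < q := cfP_lt_cfQ hirr h0 m'
    obtain ⟨s, hs⟩ := cf_rfun_eq hirr h0 m'
    set k : ℕ := q - (N + Q₀) with hk
    have hkq : k + (N + Q₀) = q := by omega
    -- the approximation
    have hap := cf_approx hirr h0 (m' + 1)
    have e1 : m' + 1 + 1 = m' + 2 := rfl
    have e2 : m' + 1 + 2 = m' + 3 := rfl
    rw [e1, e2] at hap
    have hA2 : 1 ≤ cfA x (m' + 2) := cfA_pos hirr h0 (m' + 1)
    have hA3 : 1 ≤ cfA x (m' + 3) := cfA_pos hirr h0 (m' + 2)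
    have hmul := cfA_mul_cfQ_le hirr h0 (m' + 1)
    rw [e1] at hmul
    have hrq : cfQ x (m' + 1) < q := cfQ_lt_succ hirr h0 m'
    have hrpos : 1 ≤ cfQ x (m' + 1) := cfQ_pos hirr h0 (m' + 1)
    have hΨq : 0 < Ψ (q:ℝ) := hΨposN q (by omega)
    have hcond' : Ψ (q:ℝ) < (cfA x (m' + 2) : ℝ) * (cfA x (m' + 3) : ℝ) := by
      have e3 : m' + 2 + 1 = m' + 3 := rfl
      rw [e3] at hcond
      exact hcond
    -- |x - p/q| ≤ 1/(r q Ψ q)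
    set r : ℕ := cfQ x (m' + 1) with hrdef
    have hxapp : |x - (p:ℝ)/(q:ℝ)| ≤ 1/((r:ℝ) * q * Ψ q) := by
      apply le_trans hap
      apply one_div_le_one_div_of_le
      · have h1 : (0:ℝ) < (r:ℝ) := by exact_mod_cast hrpos
        have h2 : (0:ℝ) < (q:ℝ) := by exact_mod_cast (by omega : 0 < q)
        exact mul_pos (mul_pos h1 h2) hΨq
      · -- r * q * Ψ q ≤ A3 * q^2
        have hc1 : (r:ℝ) * Ψ (q:ℝ) ≤ (q:ℝ) * (cfA x (m' + 3) : ℝ) := by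
          have hike : (cfA x (m' + 2) : ℝ) * (r:ℝ) ≤ (q:ℝ) := by exact_mod_cast hmul
          have hrR : (0:ℝ) < (r:ℝ) := by exact_mod_cast hrpos
          nlinarith [hcond', hrR, mul_le_mul_of_nonneg_right hike
            (le_of_lt (lt_of_le_of_lt (by positivity) hcond'))]
        have hqR : (0:ℝ) < (q:ℝ) := by exact_mod_cast (by omega : 0 < q)
        nlinarith [mul_le_mul_of_nonneg_right hc1 hqR.le]
    -- build the index
    have hpfin : p < k + (N + Q₀) + 1 := by omega
    by_cases hside : x ≤ (p:ℝ)/(q:ℝ)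
    · refine mem_iUnion.mpr ⟨⟨k, ⟨⟨p, hpfin⟩, s, true⟩⟩, ?_⟩
      rw [covSet]
      simp only [hkq]
      have hcr : cfRfun q p s = r := hs
      rw [hcr]
      constructor
      · rw [abs_le] at hxapp
        simp only [if_true, one_mul]
        linarith [hxapp.1]
      · simp only [if_true, zero_mul, add_zero]
        exact hside
    · refine mem_iUnion.mpr ⟨⟨k, ⟨⟨p, hpfin⟩, s, false⟩⟩, ?_⟩
      rw [covSet]
      simp only [hkq]
      have hcr : cfRfun q p s = r := hs
      rw [hcr]
      constructor
      · simp only [Bool.false_eq_true, if_false, zero_mul, sub_zero]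
        linarith [not_le.mp hside]
      · rw [abs_le] at hxapp
        simp only [Bool.false_eq_true, if_false, one_mul]
        linarith [hxapp.2]
  -- tail sums of the series
  have hgnn : ∀ q : ℕ, Q₀ ≤ q → 0 ≤ g q := by
    intro q hq
    apply Finset.sum_nonneg
    intro p hp
    rw [Finset.mem_Icc] at hp
    apply (hfpos _ _).le
    have h1 : (1:ℝ) ≤ (p:ℝ) := by exact_mod_cast hp.1
    have h2 : (0:ℝ) < (q:ℝ) := by exact_mod_cast (by omega : 0 < q)
    have h3 : 0 < Ψ (q:ℝ) := hΨposN q hq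
    positivity
  have hsummable_tail : ∀ N : ℕ, Summable (fun k => g (k + (N + Q₀))) := by
    intro N
    exact (summable_nat_add_iff (N + Q₀)).mpr hsum
  set tailR : ℕ → ℝ := fun N => ∑' k, g (k + (N + Q₀)) with htailRdef
  have htailtend : Tendsto tailR atTop (𝓝 0) := by
    have hpart : Tendsto (fun N : ℕ => ∑ i ∈ Finset.range (N + Q₀), g i) atTop
        (𝓝 (∑' i, g i)) := by
      have h1 := hsum.hasSum.tendsto_sum_nat
      exact h1.comp (tendsto_add_atTop_nat Q₀)
    have h2 := (tendsto_const_nhds (x := ∑' i, g i) (f := atTop)).sub hpart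
    rw [sub_self] at h2
    apply Tendsto.congr _ h2
    intro N
    have h3 := Summable.sum_add_tsum_nat_add (f := g) (N + Q₀) hsum
    simp only [htailRdef]
    linarith [h3]
  -- bound the sum over each cover
  have hFbound : ∀ N : ℕ,
      (∑' i : covIdx Q₀ N, m (EMetric.diam (covSet Ψ Q₀ N i)))
        ≤ ENNReal.ofReal (12 * tailR N) := by
    intro N
    rw [ENNReal.tsum_sigma']
    have hstep : ∀ k : ℕ,
        (∑' j : Fin (k + (N + Q₀) + 1) × Bool × Bool,
          m (EMetric.diam (covSet Ψ Q₀ N ⟨k, j⟩)))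
          ≤ ENNReal.ofReal (12 * g (k + (N + Q₀))) := by
      intro k
      have hqge : Q₀ ≤ k + (N + Q₀) := by omega
      have hq2 : 2 ≤ k + (N + Q₀) := by omega
      have hΨq : 0 < Ψ ((k + (N + Q₀) : ℕ) : ℝ) := hΨposN _ hqge
      rw [tsum_fintype]
      have hterm : ∀ j : Fin (k + (N + Q₀) + 1) × Bool × Bool,
          m (EMetric.diam (covSet Ψ Q₀ N ⟨k, j⟩))
            = ENNReal.ofReal (f (1/((cfRfun (k + (N + Q₀)) (j.1 : ℕ) j.2.1 : ℝ)
                * ((k + (N + Q₀) : ℕ) : ℝ) * Ψ ((k + (N + Q₀) : ℕ) : ℝ)))) := by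
        intro j
        rw [covSet_ediam]
        have hpos := (hqbound N ⟨k, j⟩).1
        rw [hmdef]
        simp only []
        rw [ENNReal.toReal_ofReal hpos.le]
      rw [Finset.sum_congr rfl (fun j _ => hterm j)]
      have hρpos : ∀ j : Fin (k + (N + Q₀) + 1) × Bool × Bool,
          0 < 1/((cfRfun (k + (N + Q₀)) (j.1 : ℕ) j.2.1 : ℝ)
              * ((k + (N + Q₀) : ℕ) : ℝ) * Ψ ((k + (N + Q₀) : ℕ) : ℝ)) :=
        fun j => (hqbound N ⟨k, j⟩).1
      rw [← ENNReal.ofReal_sum_of_nonneg (fun j _ => (hfpos _ (hρpos j)).le)]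
      apply ENNReal.ofReal_le_ofReal
      -- finite combinatorics
      set F' : ℕ → Bool → ℝ := fun p s => f (1/((cfRfun (k + (N + Q₀)) p s : ℝ)
          * ((k + (N + Q₀) : ℕ) : ℝ) * Ψ ((k + (N + Q₀) : ℕ) : ℝ))) with hF'def
      have hbool : ∀ G : Bool → ℝ, ∑ y : Bool × Bool, G y.1 = (G true + G false) + (G true + G false) := by
        intro G
        rw [Fintype.sum_prod_type, Fintype.sum_bool]
        simp [Fintype.sum_bool]
        ring
      have hsum1 : ∑ j : Fin (k + (N + Q₀) + 1) × Bool × Bool, F' (j.1 : ℕ) j.2.1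
          = (∑ p : Fin (k + (N + Q₀) + 1), ((F' (p:ℕ) true + F' (p:ℕ) false)
              + (F' (p:ℕ) true + F' (p:ℕ) false))) := by
        rw [Fintype.sum_prod_type]
        exact Finset.sum_congr rfl (fun p _ => hbool (fun s => F' (p:ℕ) s))
      rw [hsum1]
      have hsum2 : ∀ s : Bool, ∑ p : Fin (k + (N + Q₀) + 1), F' (p:ℕ) s
          = ∑ p ∈ Finset.range (k + (N + Q₀) + 1), F' p s := by
        intro s
        exact Fin.sum_univ_eq_sum_range (fun p => F' p s) _
      have hcb : ∀ s : Bool, ∑ p ∈ Finset.range (k + (N + Q₀) + 1), F' p s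
          ≤ 3 * g (k + (N + Q₀)) :=
        fun s => count_bound f hfmono hfpos (k + (N + Q₀)) hq2 _ hΨq s
      simp only [Finset.sum_add_distrib, hsum2]
      have h1 := hcb true
      have h2 := hcb false
      linarith
    calc (∑' k : ℕ, ∑' j : Fin (k + (N + Q₀) + 1) × Bool × Bool,
          m (EMetric.diam (covSet Ψ Q₀ N ⟨k, j⟩)))
        ≤ ∑' k : ℕ, ENNReal.ofReal (12 * g (k + (N + Q₀))) := ENNReal.tsum_le_tsum hstep
      _ = ENNReal.ofReal (∑' k : ℕ, 12 * g (k + (N + Q₀))) := by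
          rw [ENNReal.ofReal_tsum_of_nonneg]
          · intro k
            have := hgnn (k + (N + Q₀)) (by omega)
            linarith
          · exact (hsummable_tail N).mul_left 12
      _ = ENNReal.ofReal (12 * tailR N) := by
          rw [tsum_mul_left]
  -- put everything together
  have hmain := Measure.mkMetric_le_liminf_tsum (s := GSet Ψ)
    (r := fun N : ℕ => ENNReal.ofReal (1/(((N:ℝ) + Q₀) * Ψ (Q₀:ℝ)))) hrtend
    (t := fun N => covSet Ψ Q₀ N)
    (Eventually.of_forall (fun N i => by
      exact (covSet_ediam Ψ Q₀ N i).trans_le (ENNReal.ofReal_le_ofReal (hqbound N i).2)))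
    (Eventually.of_forall hcov) m
  have hlim0 : Tendsto (fun N : ℕ => ENNReal.ofReal (12 * tailR N)) atTop (𝓝 0) := by
    rw [show (0:ℝ≥0∞) = ENNReal.ofReal 0 by simp]
    apply ENNReal.tendsto_ofReal
    have := htailtend.const_mul (12:ℝ)
    simpa using this
  have hliminf : liminf (fun N : ℕ =>
      ∑' i : covIdx Q₀ N, m (EMetric.diam (covSet Ψ Q₀ N i))) atTop ≤ 0 := by
    calc liminf (fun N : ℕ =>
          ∑' i : covIdx Q₀ N, m (EMetric.diam (covSet Ψ Q₀ N i))) atTop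
        ≤ liminf (fun N : ℕ => ENNReal.ofReal (12 * tailR N)) atTop :=
          liminf_le_liminf (Eventually.of_forall hFbound)
      _ = 0 := hlim0.liminf_eq
  have heqm : hausdorffWith f = Measure.mkMetric m := rfl
  rw [heqm]
  exact le_antisymm (le_trans hmain hliminf) zero_le
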